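/- Let F : P_2(ℝ^d) → ℝ have intrinsic derivative D_m F satisfying |D_m F(m,x) − D_m F(m',x')| ≤ M_{mm} W_1(m,m') + M_{mx}|x−x'| for all m, m' ∈ P_2(ℝ^d) and x, x' ∈ ℝ^d. Define U^N(x) = N F(μ_x) for x ∈ (ℝ^d)^N, so that ∇_i U^N(x) = D_m F(μ_x, x^i). Then the full gradient ∇U^N : ℝ^{dN} → ℝ^{dN} is Lipschitz with constant M_{mx} + M_{mm}: |∇U^N(x) − ∇U^N(x')| ≤ (M_{mx} + M_{mm})|x − x'| for all x, x' ∈ ℝ^{dN}, with Euclidean norms. -/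

import Mathlib

open MeasureTheory
open scoped ENNReal

noncomputable section

abbrev Euc (d : ℕ) := EuclideanSpace ℝ (Fin d)

/-- The `L¹`-Wasserstein distance between measures on `ℝ^d`. -/
noncomputable def W1 {d : ℕ} (μ ν : Measure (Euc d)) : ℝ≥0∞ :=
  ⨅ π ∈ {π : Measure (Euc d × Euc d) | π.map Prod.fst = μ ∧ π.map Prod.snd = ν},
    ∫⁻ p, edist p.1 p.2 ∂π

/-- Empirical measure of `N` points. -/
noncomputable def emp {d N : ℕ} (x : Fin N → Euc d) : Measure (Euc d) :=
  (N : ℝ≥0∞)⁻¹ • ∑ i, Measure.dirac (x i)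


lemma emp_prob {d N : ℕ} (hN : 0 < N) (x : Fin N → Euc d) : IsProbabilityMeasure (emp x) := by
  constructor
  simp [emp, Measure.smul_apply, Measure.finset_sum_apply]
  rw [ENNReal.inv_mul_cancel (by exact_mod_cast hN.ne') (by simp)]

lemma integrable_dirac'' {α E : Type*} [MeasurableSpace α] [MeasurableSingletonClass α]
    [NormedAddCommGroup E] (f : α → E) (a : α) : Integrable f (Measure.dirac a) := by
  refine (integrable_const (f a)).congr ?_
  rw [Filter.EventuallyEq, MeasureTheory.ae_dirac_eq]
  exact Filter.eventually_pure.2 rfl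

lemma emp_int {d N : ℕ} (hN : 0 < N) (x : Fin N → Euc d) :
    Integrable (fun y : Euc d => ‖y‖ ^ 2) (emp x) := by
  unfold emp
  refine (integrable_smul_measure (by simp) (by simp [hN.ne'])).2 ?_
  exact integrable_finset_sum_measure.2 fun i _ => integrable_dirac'' _ _

lemma map_coupling {d N : ℕ} {α : Type*} [MeasurableSpace α] (y : Fin N → α)
    (f : α → Euc d) (hf : Measurable f) :
    (((N : ℝ≥0∞)⁻¹ • ∑ i, Measure.dirac (y i)) : Measure α).map f
      = (N : ℝ≥0∞)⁻¹ • ∑ i, Measure.dirac (f (y i)) := by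
  rw [Measure.map_smul]
  congr 1
  induction (Finset.univ : Finset (Fin N)) using Finset.induction with
  | empty => simp
  | insert _ _ h ih =>
      rw [Finset.sum_insert h, Finset.sum_insert h, Measure.map_add _ _ hf,
        Measure.map_dirac' hf, ih]

lemma W1_emp_le {d N : ℕ} (x x' : Fin N → Euc d) :
    W1 (emp x) (emp x') ≤ (N : ℝ≥0∞)⁻¹ * ∑ i, edist (x i) (x' i) := by
  have hmem : ((N : ℝ≥0∞)⁻¹ • ∑ i, Measure.dirac (x i, x' i) : Measure (Euc d × Euc d)) ∈
      {π : Measure (Euc d × Euc d) | π.map Prod.fst = emp x ∧ π.map Prod.snd = emp x'} :=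
    ⟨map_coupling _ _ measurable_fst, map_coupling _ _ measurable_snd⟩
  refine le_trans (iInf₂_le _ hmem) ?_
  rw [lintegral_smul_measure, lintegral_finset_sum_measure]
  simp [lintegral_dirac' _ (measurable_fst.edist measurable_snd)]

lemma W1_dirac_le {d : ℕ} (a b : Euc d) :
    W1 (Measure.dirac a) (Measure.dirac b) ≤ edist a b := by
  have hmem : (Measure.dirac (a, b) : Measure (Euc d × Euc d)) ∈
      {π : Measure (Euc d × Euc d) | π.map Prod.fst = Measure.dirac a ∧
        π.map Prod.snd = Measure.dirac b} :=
    ⟨Measure.map_dirac' measurable_fst _, Measure.map_dirac' measurable_snd _⟩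
  refine le_trans (iInf₂_le _ hmem) ?_
  rw [lintegral_dirac' _ (measurable_fst.edist measurable_snd)]

lemma le_W1_dirac {d : ℕ} (a b : Euc d) :
    edist a b ≤ W1 (Measure.dirac a) (Measure.dirac b) := by
  refine le_iInf₂ fun π hπ => ?_
  obtain ⟨h1, h2⟩ := hπ
  have ha : ∀ᵐ p : Euc d × Euc d ∂π, p.1 = a := by
    rw [ae_iff]
    have : {p : Euc d × Euc d | ¬ p.1 = a} = Prod.fst ⁻¹' {a}ᶜ := rfl
    rw [this, ← Measure.map_apply measurable_fst (measurableSet_singleton a).compl, h1]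
    simp
  have hb : ∀ᵐ p : Euc d × Euc d ∂π, p.2 = b := by
    rw [ae_iff]
    have : {p : Euc d × Euc d | ¬ p.2 = b} = Prod.snd ⁻¹' {b}ᶜ := rfl
    rw [this, ← Measure.map_apply measurable_snd (measurableSet_singleton b).compl, h2]
    simp
  have huniv : π Set.univ = 1 := by
    have := congrArg (fun μ : Measure (Euc d) => μ Set.univ) h1
    simpa [Measure.map_apply measurable_fst MeasurableSet.univ] using this
  calc edist a b = ∫⁻ _, edist a b ∂π := by rw [lintegral_const, huniv, mul_one]
    _ = ∫⁻ p, edist p.1 p.2 ∂π := by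
        refine lintegral_congr_ae ?_
        filter_upwards [ha, hb] with p h1' h2'
        rw [h1', h2']
    _ ≤ ∫⁻ p, edist p.1 p.2 ∂π := le_rfl

/-- **Uniform-in-`N` Lipschitz bound for `∇U^N`.**
If `D_m F` is jointly Lipschitz, `|D_m F(m,x) − D_m F(m',x')| ≤ M_{mm} W₁(m,m') + M_{mx}|x−x'|`,
and `U^N(x) = N F(μ_x)` has gradient `∇_i U^N(x) = D_m F(μ_x, x^i)`, then `∇U^N` is
`(M_{mx} + M_{mm})`-Lipschitz on `ℝ^{dN}` with Euclidean norms. -/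
theorem gradUN_lipschitz {d N : ℕ} (hN : 0 < N) (F : Measure (Euc d) → ℝ)
    (DmF : Measure (Euc d) → Euc d → Euc d) (Mmm Mmx : ℝ)
    (hLip : ∀ (m m' : Measure (Euc d)), IsProbabilityMeasure m → IsProbabilityMeasure m' →
      Integrable (fun x : Euc d => ‖x‖ ^ 2) m → Integrable (fun x : Euc d => ‖x‖ ^ 2) m' →
      ∀ x x' : Euc d, ‖DmF m x - DmF m' x'‖ ≤ Mmm * (W1 m m').toReal + Mmx * ‖x - x'‖)
    (gradUN : (Fin N → Euc d) → Fin N → Euc d)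
    (hgrad : ∀ x i, gradUN x i = DmF (emp x) (x i)) :
    ∀ x x' : Fin N → Euc d,
      Real.sqrt (∑ i, ‖gradUN x i - gradUN x' i‖ ^ 2) ≤
        (Mmx + Mmm) * Real.sqrt (∑ i, ‖x i - x' i‖ ^ 2) := by
  intro x x'
  by_cases hd : d = 0
  · subst hd
    simp [EuclideanSpace.norm_eq]
  -- a unit vector
  have hdpos : 0 < d := Nat.pos_of_ne_zero hd
  set e : Euc d := EuclideanSpace.single (⟨0, hdpos⟩ : Fin d) (1 : ℝ) with he
  have hne : ‖e‖ = 1 := by rw [he, EuclideanSpace.norm_single]; norm_num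
  -- nonnegativity of the constants
  have hMmx : 0 ≤ Mmx := by
    have hW : W1 (Measure.dirac (0 : Euc d)) (Measure.dirac 0) = 0 := by
      refine le_antisymm ?_ zero_le
      simpa using W1_dirac_le (0 : Euc d) 0
    have h := hLip (Measure.dirac 0) (Measure.dirac 0) inferInstance inferInstance
      (integrable_dirac'' _ _) (integrable_dirac'' _ _) 0 e
    rw [hW] at h
    simp only [ENNReal.toReal_zero, mul_zero, zero_add, zero_sub, norm_neg, hne, mul_one] at h
    exact le_trans (norm_nonneg _) h
  have hMmm : 0 ≤ Mmm := by
    have hW : W1 (Measure.dirac (0 : Euc d)) (Measure.dirac e) = edist (0 : Euc d) e :=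
      le_antisymm (W1_dirac_le _ _) (le_W1_dirac _ _)
    have htr : (W1 (Measure.dirac (0 : Euc d)) (Measure.dirac e)).toReal = 1 := by
      rw [hW, edist_dist, ENNReal.toReal_ofReal dist_nonneg, dist_eq_norm, zero_sub, norm_neg, hne]
    have h := hLip (Measure.dirac 0) (Measure.dirac e) inferInstance inferInstance
      (integrable_dirac'' _ _) (integrable_dirac'' _ _) 0 0
    rw [htr] at h
    simp only [mul_one, sub_self, norm_zero, mul_zero, add_zero] at h
    exact le_trans (norm_nonneg _) h
  -- notation
  set S := Real.sqrt (∑ i, ‖x i - x' i‖ ^ 2) with hSdef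
  have hSnn : 0 ≤ S := Real.sqrt_nonneg _
  set w := (W1 (emp x) (emp x')).toReal with hwdef
  have hwnn : 0 ≤ w := ENNReal.toReal_nonneg
  have hNR : (0 : ℝ) < N := by exact_mod_cast hN
  -- bound on w
  have key1 : w ≤ (N : ℝ)⁻¹ * ∑ i, ‖x i - x' i‖ := by
    have hfin : ((N : ℝ≥0∞)⁻¹ * ∑ i, edist (x i) (x' i)) ≠ ∞ := by
      refine ENNReal.mul_ne_top ?_ ?_
      · simp [hN.ne']
      · exact (ENNReal.sum_lt_top.2 fun i _ => (edist_lt_top _ _)).ne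
    have := ENNReal.toReal_mono hfin (W1_emp_le x x')
    rw [ENNReal.toReal_mul, ENNReal.toReal_inv, ENNReal.toReal_natCast,
      ENNReal.toReal_sum (fun i _ => (edist_lt_top _ _).ne)] at this
    simpa [hwdef, ← dist_edist, dist_eq_norm] using this
  have key2 : ∑ i, ‖x i - x' i‖ ≤ Real.sqrt N * S := by
    have h := sq_sum_le_card_mul_sum_sq (s := (Finset.univ : Finset (Fin N)))
      (f := fun i => ‖x i - x' i‖)
    rw [Finset.card_univ, Fintype.card_fin] at h
    have h2 : ∑ i, ‖x i - x' i‖ = Real.sqrt ((∑ i, ‖x i - x' i‖) ^ 2) :=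
      (Real.sqrt_sq (Finset.sum_nonneg fun i _ => norm_nonneg _)).symm
    rw [h2, hSdef, ← Real.sqrt_mul (by positivity)]
    exact Real.sqrt_le_sqrt h
  have key3 : w * Real.sqrt N ≤ S := by
    have hsq : Real.sqrt N * Real.sqrt N = (N : ℝ) := Real.mul_self_sqrt hNR.le
    have hsqpos : 0 < Real.sqrt N := Real.sqrt_pos.2 hNR
    have key12 : w ≤ (N : ℝ)⁻¹ * (Real.sqrt N * S) :=
      key1.trans (mul_le_mul_of_nonneg_left key2 (by positivity))
    calc w * Real.sqrt N ≤ ((N : ℝ)⁻¹ * (Real.sqrt N * S)) * Real.sqrt N :=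
          mul_le_mul_of_nonneg_right key12 hsqpos.le
      _ = S * ((N : ℝ)⁻¹ * (Real.sqrt N * Real.sqrt N)) := by ring
      _ = S := by rw [hsq, inv_mul_cancel₀ hNR.ne', mul_one]
  -- pointwise bound
  have hterm : ∀ i, ‖gradUN x i - gradUN x' i‖ ≤ Mmx * ‖x i - x' i‖ + Mmm * w := by
    intro i
    rw [hgrad, hgrad]
    have := hLip (emp x) (emp x') (emp_prob hN x) (emp_prob hN x')
      (emp_int hN x) (emp_int hN x') (x i) (x' i)
    linarith
  -- Minkowski via EuclideanSpace
  set u : EuclideanSpace ℝ (Fin N) := WithLp.toLp 2 (fun i => Mmx * ‖x i - x' i‖) with hu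
  set v : EuclideanSpace ℝ (Fin N) := WithLp.toLp 2 (fun _ => Mmm * w) with hv
  have step1 : Real.sqrt (∑ i, ‖gradUN x i - gradUN x' i‖ ^ 2) ≤ ‖u + v‖ := by
    rw [EuclideanSpace.norm_eq]
    refine Real.sqrt_le_sqrt (Finset.sum_le_sum fun i _ => ?_)
    have h1 : (u + v) i = Mmx * ‖x i - x' i‖ + Mmm * w := by
      simp [hu, hv, PiLp.add_apply]
    rw [Real.norm_eq_abs, sq_abs, h1]
    exact pow_le_pow_left₀ (norm_nonneg _) (hterm i) 2
  have hnu : ‖u‖ = Mmx * S := by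
    rw [EuclideanSpace.norm_eq]
    simp only [hu, PiLp.toLp_apply, Real.norm_eq_abs, sq_abs, mul_pow]
    rw [← Finset.mul_sum, Real.sqrt_mul (sq_nonneg _), Real.sqrt_sq hMmx]
  have hnv : ‖v‖ ≤ Mmm * S := by
    rw [EuclideanSpace.norm_eq]
    simp only [hv, PiLp.toLp_apply, Real.norm_eq_abs, sq_abs]
    rw [Finset.sum_const, Finset.card_univ, Fintype.card_fin, nsmul_eq_mul,
      Real.sqrt_mul (by positivity), Real.sqrt_sq (by positivity)]
    calc Real.sqrt N * (Mmm * w) = Mmm * (w * Real.sqrt N) := by ring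
      _ ≤ Mmm * S := by gcongr
  calc Real.sqrt (∑ i, ‖gradUN x i - gradUN x' i‖ ^ 2) ≤ ‖u + v‖ := step1
    _ ≤ ‖u‖ + ‖v‖ := norm_add_le _ _
    _ ≤ Mmx * S + Mmm * S := by rw [hnu]; gcongr
    _ = (Mmx + Mmm) * S := by ring


end
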